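/- On the Lie algebra L₆,₁, the two-form ω = e¹⁴ + e²⁵ - e³⁶ satisfies d(ω∧ω) = 0. -/

import Mathlib

/-!
STATEMENT 8: On the Lie algebra L₆,₁, the two-form ω = e¹⁴ + e²⁵ - e³⁶ satisfies
d(ω∧ω) = 0.

Model: indices shifted to 0,…,5; forms are encoded by their values on basis tuples.
The wedge ω∧ω is computed by the shuffle formula
(ω∧ω)(x₁,…,x₄) = (1/(2!·2!)) Σ_{σ∈S₄} sign(σ) ω(x_{σ(1)},x_{σ(2)}) ω(x_{σ(3)},x_{σ(4)}),
and d is the Chevalley–Eilenberg differential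
dτ(x₀,…,x₄) = Σ_{p<q} (-1)^{p+q} τ([x_p,x_q], …remaining…).
-/

/-- Value of e^a ∧ e^b on (e_i, e_j). -/
def wf (a b i j : Fin 6) : ℝ :=
  (if a = i then (1:ℝ) else 0) * (if b = j then (1:ℝ) else 0) -
  (if a = j then (1:ℝ) else 0) * (if b = i then (1:ℝ) else 0)

/-- Structure equations of L₆,₁. -/
def dL61 (k i j : Fin 6) : ℝ :=
  if k = 0 then wf 1 2 i j
  else if k = 1 then -(wf 0 2 i j)
  else if k = 2 then wf 0 1 i j
  else if k = 3 then wf 1 5 i j - wf 2 4 i j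
  else if k = 4 then -(wf 0 5 i j) + wf 2 3 i j
  else wf 0 4 i j - wf 1 3 i j

/-- Structure constants: the e^m-coefficient of [e_i,e_j] is -(de^m)(e_i,e_j). -/
def BcL61 (m i j : Fin 6) : ℝ := -(dL61 m i j)

/-- Coefficients (basis values) of ω = e¹⁴ + e²⁵ - e³⁶. -/
def omL61 (i j : Fin 6) : ℝ := wf 0 3 i j + wf 1 4 i j - wf 2 5 i j

/-- Basis values of the wedge square ω∧ω. -/
noncomputable def omom (i j k l : Fin 6) : ℝ :=
  (1/4 : ℝ) * ∑ σ : Equiv.Perm (Fin 4),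
    ((Equiv.Perm.sign σ : ℤ) : ℝ) *
      omL61 (![i,j,k,l] (σ 0)) (![i,j,k,l] (σ 1)) * omL61 (![i,j,k,l] (σ 2)) (![i,j,k,l] (σ 3))

/-- The Chevalley–Eilenberg differential of a 4-form (given by its basis values),
evaluated on a basis 5-tuple. -/
def d4L61 (t : Fin 6 → Fin 6 → Fin 6 → Fin 6 → ℝ) (a b c d e : Fin 6) : ℝ :=
  -(∑ m : Fin 6, BcL61 m a b * t m c d e) + (∑ m : Fin 6, BcL61 m a c * t m b d e)
  - (∑ m : Fin 6, BcL61 m a d * t m b c e) + (∑ m : Fin 6, BcL61 m a e * t m b c d)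
  - (∑ m : Fin 6, BcL61 m b c * t m a d e) + (∑ m : Fin 6, BcL61 m b d * t m a c e)
  - (∑ m : Fin 6, BcL61 m b e * t m a c d) - (∑ m : Fin 6, BcL61 m c d * t m a b e)
  + (∑ m : Fin 6, BcL61 m c e * t m a b d) - (∑ m : Fin 6, BcL61 m d e * t m a b c)

section L61Aux

open Equiv Equiv.Perm

private lemma s1aux (f : Equiv.Perm (Fin 1) → ℝ) : ∑ σ : Equiv.Perm (Fin 1), f σ = f 1 :=
  Fintype.sum_subsingleton f 1

private lemma s2aux (f : Equiv.Perm (Fin 2) → ℝ) :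
    ∑ σ : Equiv.Perm (Fin 2), f σ =
    ∑ p : Fin 2, f (decomposeFin.symm (p, 1)) := by
  rw [← (decomposeFin (n := 1)).symm.sum_comp, Fintype.sum_prod_type]
  exact Finset.sum_congr rfl fun p _ => s1aux _

private lemma s3aux (f : Equiv.Perm (Fin 3) → ℝ) :
    ∑ σ : Equiv.Perm (Fin 3), f σ =
    ∑ p : Fin 3, ∑ q : Fin 2, f (decomposeFin.symm (p, decomposeFin.symm (q, 1))) := by
  rw [← (decomposeFin (n := 2)).symm.sum_comp, Fintype.sum_prod_type]
  exact Finset.sum_congr rfl fun p _ => s2aux _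

private lemma s4aux (f : Equiv.Perm (Fin 4) → ℝ) :
    ∑ σ : Equiv.Perm (Fin 4), f σ =
    ∑ p : Fin 4, ∑ q : Fin 3, ∑ r : Fin 2,
      f (decomposeFin.symm (p, decomposeFin.symm (q, decomposeFin.symm (r, 1)))) := by
  rw [← (decomposeFin (n := 3)).symm.sum_comp, Fintype.sum_prod_type]
  exact Finset.sum_congr rfl fun p _ => s3aux _

end L61Aux

lemma omom_eq (i j k l : Fin 6) :
    omom i j k l = 2*(omL61 i j * omL61 k l - omL61 i k * omL61 j l + omL61 i l * omL61 j k) := by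
  rw [omom, s4aux]
  simp (config := { decide := true }) only [Fin.sum_univ_four, Fin.sum_univ_three, Fin.sum_univ_two,
    show (1:Fin 4)=Fin.succ 0 from rfl, show (2:Fin 4)=Fin.succ 1 from rfl,
    show (3:Fin 4)=Fin.succ 2 from rfl, show (1:Fin 3)=Fin.succ 0 from rfl,
    show (2:Fin 3)=Fin.succ 1 from rfl, show (1:Fin 2)=Fin.succ 0 from rfl,
    Equiv.Perm.decomposeFin.symm_sign, Equiv.Perm.decomposeFin_symm_apply_zero,
    Equiv.Perm.decomposeFin_symm_apply_succ, Equiv.Perm.one_apply,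
    Equiv.swap_apply_def, Matrix.cons_val_zero, Matrix.cons_val_succ,
    Equiv.Perm.sign_one, Equiv.Perm.sign_swap', Units.val_one, Int.cast_one, Int.cast_neg,
    Matrix.cons_val_one, Matrix.head_cons]
  norm_num
  simp only [Matrix.cons_val_two, Matrix.tail_cons, Matrix.head_cons]
  ring_nf
  have h : ∀ a b : Fin 6, omL61 b a = -omL61 a b := by intro a b; simp [omL61, wf]; ring
  rw [h k l, h i j, h j l, h i k, h j k, h i l]
  ring

def wfZ (a b i j : Fin 6) : ℤ :=
  (if a = i then (1:ℤ) else 0) * (if b = j then (1:ℤ) else 0) -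
  (if a = j then (1:ℤ) else 0) * (if b = i then (1:ℤ) else 0)

def dZ (k i j : Fin 6) : ℤ :=
  if k = 0 then wfZ 1 2 i j
  else if k = 1 then -(wfZ 0 2 i j)
  else if k = 2 then wfZ 0 1 i j
  else if k = 3 then wfZ 1 5 i j - wfZ 2 4 i j
  else if k = 4 then -(wfZ 0 5 i j) + wfZ 2 3 i j
  else wfZ 0 4 i j - wfZ 1 3 i j

def BcZ (m i j : Fin 6) : ℤ := -(dZ m i j)

def omZ (i j : Fin 6) : ℤ := wfZ 0 3 i j + wfZ 1 4 i j - wfZ 2 5 i j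

def om2Z (i j k l : Fin 6) : ℤ :=
  2*(omZ i j * omZ k l - omZ i k * omZ j l + omZ i l * omZ j k)

def sum6 (f : Fin 6 → ℤ) : ℤ := f 0 + f 1 + f 2 + f 3 + f 4 + f 5

def d4Z (a b c d e : Fin 6) : ℤ :=
  -(sum6 fun m => BcZ m a b * om2Z m c d e) + (sum6 fun m => BcZ m a c * om2Z m b d e)
  - (sum6 fun m => BcZ m a d * om2Z m b c e) + (sum6 fun m => BcZ m a e * om2Z m b c d)
  - (sum6 fun m => BcZ m b c * om2Z m a d e) + (sum6 fun m => BcZ m b d * om2Z m a c e)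
  - (sum6 fun m => BcZ m b e * om2Z m a c d) - (sum6 fun m => BcZ m c d * om2Z m a b e)
  + (sum6 fun m => BcZ m c e * om2Z m a b d) - (sum6 fun m => BcZ m d e * om2Z m a b c)

set_option maxHeartbeats 4000000 in
lemma d4Z_zero : ∀ a b c d e : Fin 6, d4Z a b c d e = 0 := by decide

lemma wf_cast (a b i j : Fin 6) : wf a b i j = ((wfZ a b i j : ℤ) : ℝ) := by
  simp only [wf, wfZ, Int.cast_sub, Int.cast_mul, apply_ite (Int.cast : ℤ → ℝ),
    Int.cast_one, Int.cast_zero]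

lemma om_cast (i j : Fin 6) : omL61 i j = ((omZ i j : ℤ) : ℝ) := by
  simp only [omL61, omZ, wf_cast]; push_cast; ring

lemma Bc_cast (m i j : Fin 6) : BcL61 m i j = ((BcZ m i j : ℤ) : ℝ) := by
  unfold BcL61 BcZ dL61 dZ
  split_ifs <;> simp only [wf_cast] <;> push_cast <;> ring

lemma omom_cast (i j k l : Fin 6) : omom i j k l = ((om2Z i j k l : ℤ) : ℝ) := by
  rw [omom_eq]; simp only [om2Z, om_cast]; push_cast; ring

/-- d(ω∧ω) = 0 on L₆,₁. -/
theorem L61_omom_closed : ∀ a b c d e : Fin 6, d4L61 omom a b c d e = 0 := by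
  intro a b c d e
  have h : d4L61 omom a b c d e = ((d4Z a b c d e : ℤ) : ℝ) := by
    simp only [d4L61, Fin.sum_univ_six, Bc_cast, omom_cast, d4Z, sum6]
    push_cast
    ring
  rw [h, d4Z_zero a b c d e]
  norm_num
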